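/- For each fixed y ∈ [0,b_2], the function x ↦ eu(y,x) is weakly increasing and differentiable on (a_1,a_2), with ∂eu/∂x(y,x) = f_1(x)·(y − p_w(eu(y,x))) / (p_w'(eu(y,x))·F_1(x) + p_p'(eu(y,x))), and y − p_w(eu(y,x)) ≥ 0 for all such x. -/

import Mathlib

open Filter

/-- Auxiliary: the product of a function vanishing at `x0` with derivative `F'`
and a function merely continuous at `x0` has derivative `F' * r x0` at `x0`. -/
lemma hasDerivAt_mul_of_eq_zero {F r : ℝ → ℝ} {x0 F' : ℝ}
    (hF : HasDerivAt F F' x0) (hF0 : F x0 = 0)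
    (hr : Filter.Tendsto r (nhds x0) (nhds (r x0))) :
    HasDerivAt (fun x => F x * r x) (F' * r x0) x0 := by
  rw [hasDerivAt_iff_tendsto_slope] at hF ⊢
  have hr' : Tendsto r (nhdsWithin x0 {x0}ᶜ) (nhds (r x0)) :=
    hr.mono_left nhdsWithin_le_nhds
  have h := hF.mul hr'
  apply h.congr'
  filter_upwards [self_mem_nhdsWithin] with z hz
  have hz' : z - x0 ≠ 0 := sub_ne_zero.mpr hz
  simp only [slope_def_field, hF0, sub_zero]
  field_simp
  ring

/-- For each fixed `y ∈ [0,b₂]`, `x ↦ eu y x` is weakly increasing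
and differentiable on `(a₁,a₂)`, with
`∂eu/∂x (y,x) = f₁ x · (y − p_w (eu y x)) / (p_w' (eu y x) · F₁ x + p_p' (eu y x))`,
and `y − p_w (eu y x) ≥ 0` for all such `x`. -/
theorem eu_curve_monotone_differentiable
    (a1 a2 b2 : ℝ) (ha : a1 < a2) (hb2 : 0 < b2)
    (F1 f1 : ℝ → ℝ)
    (hF1_cont : Continuous F1) (hF1_mono : Monotone F1)
    (hF1_range : ∀ x, F1 x ∈ Set.Icc (0:ℝ) 1)
    (hF1_pos : ∀ x ∈ Set.Ioc a1 a2, 0 < F1 x)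
    (hf1_cont : Continuous f1)
    (hf1_pos : ∀ x ∈ Set.Ioc a1 a2, 0 < f1 x)
    (hF1_deriv : ∀ x, HasDerivAt F1 (f1 x) x)
    (p_w p_p p_w' p_p' : ℝ → ℝ)
    (hpw : ∀ t, HasDerivAt p_w (p_w' t) t)
    (hpp : ∀ t, HasDerivAt p_p (p_p' t) t)
    (hpw'_nonneg : ∀ t, 0 ≤ p_w' t) (hpp'_nonneg : ∀ t, 0 ≤ p_p' t)
    (hsum_pos : ∀ t, 0 < p_w' t + p_p' t)
    (hpw0 : p_w 0 = 0) (hpp0 : p_p 0 = 0)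
    (hbij : ∀ a ∈ Set.Ioc (0:ℝ) 1, Function.Bijective (fun t => a * p_w t + p_p t))
    (u : ℝ → ℝ)
    (hu_cont : ContinuousOn u (Set.Icc 0 b2))
    (hu_mono : MonotoneOn u (Set.Icc 0 b2))
    (hu_nonneg : ∀ y ∈ Set.Icc (0:ℝ) b2, 0 ≤ u y)
    (hu0 : u 0 = 0)
    (eu : ℝ → ℝ → ℝ)
    (heu : ∀ y ∈ Set.Icc (0:ℝ) b2, ∀ x ∈ Set.Ioc a1 a2,
      u y = F1 x * y - p_w (eu y x) * F1 x - p_p (eu y x)) :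
    ∀ y ∈ Set.Icc (0:ℝ) b2,
      MonotoneOn (fun x => eu y x) (Set.Ioo a1 a2) ∧
      ∀ x ∈ Set.Ioo a1 a2,
        HasDerivAt (fun x' => eu y x')
          (f1 x * (y - p_w (eu y x)) / (p_w' (eu y x) * F1 x + p_p' (eu y x))) x ∧
        0 ≤ y - p_w (eu y x) := by
  have hpw_mono : Monotone p_w :=
    monotone_of_deriv_nonneg (fun t => (hpw t).differentiableAt)
      (fun t => by rw [(hpw t).deriv]; exact hpw'_nonneg t)
  have hpp_mono : Monotone p_p :=
    monotone_of_deriv_nonneg (fun t => (hpp t).differentiableAt)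
      (fun t => by rw [(hpp t).deriv]; exact hpp'_nonneg t)
  have hpw_cont : Continuous p_w :=
    continuous_iff_continuousAt.mpr (fun t => (hpw t).continuousAt)
  have hgd : ∀ (a t : ℝ),
      HasDerivAt (fun s => a * p_w s + p_p s) (a * p_w' t + p_p' t) t :=
    fun a t => ((hpw t).const_mul a).add (hpp t)
  have hgd_pos : ∀ a ∈ Set.Ioc (0:ℝ) 1, ∀ t, 0 < a * p_w' t + p_p' t := by
    intro a ha' t
    nlinarith [hsum_pos t, hpw'_nonneg t, hpp'_nonneg t, ha'.1, ha'.2]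
  have hg_smono : ∀ a ∈ Set.Ioc (0:ℝ) 1, StrictMono (fun s => a * p_w s + p_p s) := by
    intro a ha'
    exact strictMono_of_deriv_pos (fun t => by
      rw [(hgd a t).deriv]; exact hgd_pos a ha' t)
  intro y hy
  obtain ⟨hy0, hyb⟩ := hy
  have huy : 0 ≤ u y := hu_nonneg y ⟨hy0, hyb⟩
  have heq : ∀ x ∈ Set.Ioc a1 a2,
      F1 x * p_w (eu y x) + p_p (eu y x) = F1 x * y - u y := by
    intro x hx
    have h := heu y ⟨hy0, hyb⟩ x hx
    have hc := mul_comm (p_w (eu y x)) (F1 x)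
    linarith
  -- nonnegativity of y - p_w (eu y x)
  have hnn : ∀ x ∈ Set.Ioc a1 a2, 0 ≤ y - p_w (eu y x) := by
    intro x hx
    by_contra h
    push_neg at h
    have ht_pos : (0:ℝ) < eu y x := by
      by_contra ht
      push_neg at ht
      have := hpw_mono ht
      rw [hpw0] at this
      linarith
    have hpp_nn : 0 ≤ p_p (eu y x) := by
      have := hpp_mono ht_pos.le
      rwa [hpp0] at this
    have hFpos := hF1_pos x hx
    have heqx := heq x hx
    nlinarith
  -- monotonicity
  have hmono : MonotoneOn (fun x => eu y x) (Set.Ioc a1 a2) := by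
    intro x1 hx1 x2 hx2 hx12
    by_contra hlt
    push_neg at hlt
    beta_reduce at hlt
    have hF12 : F1 x1 ≤ F1 x2 := hF1_mono hx12
    have h1 := heq x1 hx1
    have h2 := heq x2 hx2
    have hsm : F1 x2 * p_w (eu y x2) + p_p (eu y x2)
        < F1 x2 * p_w (eu y x1) + p_p (eu y x1) :=
      hg_smono (F1 x2) ⟨hF1_pos x2 hx2, (hF1_range x2).2⟩ hlt
    have hnn1 := hnn x1 hx1
    nlinarith [mul_nonneg (sub_nonneg.mpr hF12) hnn1]
  refine ⟨hmono.mono Set.Ioo_subset_Ioc_self, ?_⟩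
  intro x0 hx0
  have hx0' : x0 ∈ Set.Ioc a1 a2 := Set.Ioo_subset_Ioc_self hx0
  refine ⟨?_, hnn x0 hx0'⟩
  obtain ⟨hx01, hx02⟩ := hx0
  have ha0m : F1 x0 ∈ Set.Ioc (0:ℝ) 1 := ⟨hF1_pos x0 hx0', (hF1_range x0).2⟩
  set a0 : ℝ := F1 x0 with ha0
  set t0 : ℝ := eu y x0 with ht0
  set g0 : ℝ → ℝ := fun s => a0 * p_w s + p_p s with hg0
  have hg0_sm : StrictMono g0 := hg_smono a0 ha0m
  have hg0_bij : Function.Bijective g0 := hbij a0 ha0m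
  let E : ℝ ≃o ℝ := ⟨Equiv.ofBijective g0 hg0_bij, hg0_sm.le_iff_le⟩
  have hEapp : ∀ s, E s = g0 s := fun s => rfl
  have hEsa : ∀ s, E.symm (g0 s) = s := fun s => E.symm_apply_apply s
  -- the key algebraic identity
  have hq : ∀ x ∈ Set.Ioc a1 a2,
      g0 (eu y x) = g0 t0 + (F1 x - a0) * (y - p_w (eu y x)) := by
    intro x hx
    have h1 := heq x hx
    have h0 := heq x0 hx0'
    rw [← ha0, ← ht0] at h0
    show a0 * p_w (eu y x) + p_p (eu y x)
      = (a0 * p_w t0 + p_p t0) + (F1 x - a0) * (y - p_w (eu y x))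
    linear_combination h1 - h0
  -- continuity of x ↦ eu y x at x0
  set c : ℝ := (a1 + x0) / 2 with hc
  set d : ℝ := (x0 + a2) / 2 with hd
  have hc2 : c < x0 := by rw [hc]; linarith
  have hd1 : x0 < d := by rw [hd]; linarith
  have hcI : c ∈ Set.Ioc a1 a2 := ⟨by rw [hc]; linarith, by rw [hc]; linarith⟩
  have hdI : d ∈ Set.Ioc a1 a2 := ⟨by rw [hd]; linarith, by rw [hd]; linarith⟩
  set M : ℝ := max |y - p_w (eu y c)| |y - p_w (eu y d)| with hM
  have hbound : ∀ x ∈ Set.Icc c d, |y - p_w (eu y x)| ≤ M := by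
    intro x hx
    have hxI : x ∈ Set.Ioc a1 a2 := ⟨lt_of_lt_of_le hcI.1 hx.1, le_trans hx.2 hdI.2⟩
    have h1 : eu y c ≤ eu y x := hmono hcI hxI hx.1
    have h2 : eu y x ≤ eu y d := hmono hxI hdI hx.2
    have h3 := hpw_mono h1
    have h4 := hpw_mono h2
    rw [abs_le]
    constructor
    · have h5 := neg_abs_le (y - p_w (eu y d))
      have h6 := le_max_right |y - p_w (eu y c)| |y - p_w (eu y d)|
      linarith
    · have h5 := le_abs_self (y - p_w (eu y c))
      have h6 := le_max_left |y - p_w (eu y c)| |y - p_w (eu y d)|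
      linarith
  have htend0 : Tendsto (fun x => (F1 x - a0) * (y - p_w (eu y x)))
      (nhds x0) (nhds 0) := by
    apply squeeze_zero_norm' (a := fun x => |F1 x - a0| * M)
    · filter_upwards [Ioo_mem_nhds hc2 hd1] with x hx
      rw [Real.norm_eq_abs, abs_mul]
      exact mul_le_mul_of_nonneg_left
        (hbound x ⟨hx.1.le, hx.2.le⟩) (abs_nonneg _)
    · have h : Tendsto (fun x => |F1 x - a0| * M) (nhds x0) (nhds (|F1 x0 - a0| * M)) :=
        (((hF1_cont.sub continuous_const).abs.mul continuous_const).tendsto x0 :)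
      simpa [← ha0] using h
  have htq : Tendsto (fun x => g0 (eu y x)) (nhds x0) (nhds (g0 t0)) := by
    have h := htend0.const_add (g0 t0)
    rw [add_zero] at h
    apply h.congr'
    filter_upwards [Ioo_mem_nhds hx01 hx02] with x hx
    exact (hq x (Set.Ioo_subset_Ioc_self hx)).symm
  have hψcont : Tendsto (fun x => eu y x) (nhds x0) (nhds t0) := by
    have hEs : Continuous (E.symm : ℝ → ℝ) := E.symm.continuous
    have h2 := (hEs.tendsto (g0 t0)).comp htq
    rw [show ((E.symm : ℝ → ℝ) (g0 t0)) = t0 from hEsa t0] at h2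
    exact h2.congr (fun x => hEsa (eu y x))
  -- derivative of the inner function
  have hr_cont : Tendsto (fun x => y - p_w (eu y x)) (nhds x0)
      (nhds (y - p_w (eu y x0))) := by
    exact tendsto_const_nhds.sub ((hpw_cont.tendsto t0).comp hψcont)
  have hFd : HasDerivAt (fun x => F1 x - a0) (f1 x0) x0 :=
    (hF1_deriv x0).sub_const a0
  have hprod : HasDerivAt (fun x => (F1 x - a0) * (y - p_w (eu y x)))
      (f1 x0 * (y - p_w (eu y x0))) x0 :=
    hasDerivAt_mul_of_eq_zero hFd (by rw [ha0]; ring) hr_cont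
  have hqd : HasDerivAt (fun x => g0 t0 + (F1 x - a0) * (y - p_w (eu y x)))
      (f1 x0 * (y - p_w t0)) x0 := hprod.const_add (g0 t0)
  -- derivative of E.symm
  have hden_pos : 0 < a0 * p_w' t0 + p_p' t0 := hgd_pos a0 ha0m t0
  have hg0d : HasDerivAt g0 (a0 * p_w' t0 + p_p' t0) ((E.symm : ℝ → ℝ) (g0 t0)) := by
    rw [hEsa t0]; exact hgd a0 t0
  have hEsymm : HasDerivAt (E.symm : ℝ → ℝ) (a0 * p_w' t0 + p_p' t0)⁻¹ (g0 t0) :=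
    HasDerivAt.of_local_left_inverse E.symm.continuous.continuousAt hg0d hden_pos.ne'
      (Filter.Eventually.of_forall
        (fun z => (hEapp (E.symm z)).symm.trans (E.apply_symm_apply z)))
  have hpt : g0 t0 + (F1 x0 - a0) * (y - p_w (eu y x0)) = g0 t0 := by
    rw [ha0]; ring
  have hEsymm' : HasDerivAt (E.symm : ℝ → ℝ) (a0 * p_w' t0 + p_p' t0)⁻¹
      ((fun x => g0 t0 + (F1 x - a0) * (y - p_w (eu y x))) x0) := by
    simpa [hpt] using hEsymm
  have hcomp := HasDerivAt.comp x0 hEsymm' hqd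
  have hfinal : HasDerivAt (fun x' => eu y x')
      ((a0 * p_w' t0 + p_p' t0)⁻¹ * (f1 x0 * (y - p_w t0))) x0 := by
    apply hcomp.congr_of_eventuallyEq
    filter_upwards [Ioo_mem_nhds hx01 hx02] with x hx
    show eu y x = (E.symm : ℝ → ℝ) (g0 t0 + (F1 x - a0) * (y - p_w (eu y x)))
    rw [← hq x (Set.Ioo_subset_Ioc_self hx)]
    exact (hEsa (eu y x)).symm
  have hval : (a0 * p_w' t0 + p_p' t0)⁻¹ * (f1 x0 * (y - p_w t0))
      = f1 x0 * (y - p_w t0) / (p_w' t0 * a0 + p_p' t0) := by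
    rw [inv_mul_eq_div]
    rw [mul_comm (p_w' t0) a0]
  rw [hval] at hfinal
  exact hfinal
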